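/- Let G be a finite abelian group of order n with identity e, A a Cayley matrix on G, and fix τ ∈ (0, 1/n) with τN ∈ ℕ. Define the measure μ(e) = 1 − τ(n−1) and μ(g) = τ for g ≠ e, and let W = D A Dᵀ be the model matrix of SBM(A, μ, N), and V the associated isometry. If χ_{α_1},...,χ_{α_m} (m > 1) are distinct characters of G that are all eigenvectors of A with the same eigenvalue γ, then for each 1 < i ≤ m the vector V((i−1)χ_{α_i} − Σ_{j=1}^{i−1} χ_{α_j}) is an eigenvector of W with eigenvalue Nτγ, and these m−1 vectors are pairwise orthogonal. In particular, Nτγ is an eigenvalue of W with multiplicity at least m−1. -/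

import Mathlib

open scoped BigOperators ComplexConjugate
open Matrix

/-- The `N × n` block indicator matrix, over `ℂ`. -/
def blockD (N n : ℕ) (k : Fin n → ℕ) : Matrix (Fin N) (Fin n) ℂ :=
  Matrix.of fun r j =>
    if (∑ i : Fin n, if (i : ℕ) < (j : ℕ) then k i else 0) ≤ (r : ℕ) ∧
        (r : ℕ) < (∑ i : Fin n, if (i : ℕ) < (j : ℕ) then k i else 0) + k j
    then 1 else 0

/-- The vector `(i-1)χ_{α_i} - ∑_{j<i} χ_{α_j}` (0-indexed: `i·χ_{α_i} - ∑_{j<i} χ_{α_j}`),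
viewed as a vector in `ℂⁿ` via the enumeration `g`. -/
noncomputable def pertVec {n m : ℕ} {G : Type*} [CommGroup G] (g : Fin n ≃ G) (α : Fin m → (G →* ℂ)) (i : Fin m) :
    Fin n → ℂ :=
  fun p => ((i : ℕ) : ℂ) * α i (g p) - ∑ j : Fin m, if (j : ℕ) < (i : ℕ) then α j (g p) else 0

section Aux

lemma count_lt (m c : ℕ) (hc : c ≤ m) : (∑ j : Fin m, if (j:ℕ) < c then (1:ℂ) else 0) = c := by
  rw [Fin.sum_univ_eq_sum_range (fun j => if j < c then (1:ℂ) else 0) m, Finset.sum_ite,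
    Finset.sum_const, Finset.sum_const]
  have : (Finset.range m).filter (· < c) = Finset.range c := by
    ext j; simp; omega
  rw [this]; simp

lemma char_sum (G : Type*) [CommGroup G] [Fintype G] (χ : G →* ℂ) (y : G) (hy : χ y ≠ 1) :
    ∑ x : G, χ x = 0 := by
  have h : χ y * ∑ x : G, χ x = ∑ x : G, χ x := by
    rw [Finset.mul_sum]
    simp_rw [← _root_.map_mul]
    exact Fintype.sum_equiv (Equiv.mulLeft y) _ _ (fun x => rfl)
  have h2 : (χ y - 1) * ∑ x : G, χ x = 0 := by linear_combination h
  rcases mul_eq_zero.1 h2 with h3 | h3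
  · exact absurd (by linear_combination h3) hy
  · exact h3

lemma conj_char_mul {G : Type*} [CommGroup G] (χ : G →* ℂ) (hχ : ∀ x, ‖χ x‖ = 1)
    (x : G) : χ x * conj (χ x) = 1 := by
  rw [Complex.mul_conj]
  norm_cast
  rw [Complex.normSq_eq_norm_sq, hχ x]; norm_num

lemma char_orth (G : Type*) [CommGroup G] [Fintype G] (χ ψ : G →* ℂ)
    (hχ : ∀ x, ‖χ x‖ = 1) (hne : χ ≠ ψ) :
    ∑ x : G, conj (χ x) * ψ x = 0 := by
  set φ : G →* ℂ := ((starRingEnd ℂ).toMonoidHom.comp χ) * ψ with hφ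
  have hφx : ∀ x, φ x = conj (χ x) * ψ x := fun x => rfl
  have hex : ∃ y, φ y ≠ 1 := by
    by_contra h
    push_neg at h
    apply hne
    ext x
    have hx := h x
    rw [hφx] at hx
    have := conj_char_mul χ hχ x
    linear_combination ψ x * this - χ x * hx
  obtain ⟨y, hy⟩ := hex
  calc ∑ x : G, conj (χ x) * ψ x = ∑ x : G, φ x := by simp_rw [hφx]
    _ = 0 := char_sum G φ y hy

noncomputable def Spart (n : ℕ) (k : Fin n → ℕ) (j : Fin n) : ℕ :=
  ∑ i : Fin n, if (i : ℕ) < (j : ℕ) then k i else 0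

lemma Spart_add_le (n : ℕ) (k : Fin n → ℕ) (p q : Fin n) (hpq : (p:ℕ) < (q:ℕ)) :
    Spart n k p + k p ≤ Spart n k q := by
  unfold Spart
  have key : ∀ i : Fin n, ((if (i:ℕ) < (p:ℕ) then k i else 0) + (if i = p then k p else 0))
      ≤ (if (i:ℕ) < (q:ℕ) then k i else 0) := by
    intro i
    rcases eq_or_ne i p with rfl | hip
    · simp [hpq]
    · have : ¬ ((i:ℕ) = (p:ℕ)) := fun h => hip (Fin.ext h)
      split_ifs <;> simp_all <;> omega
  calc (∑ i : Fin n, if (i:ℕ) < (p:ℕ) then k i else 0) + k p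
      = ∑ i : Fin n, ((if (i:ℕ) < (p:ℕ) then k i else 0) + (if i = p then k p else 0)) := by
        rw [Finset.sum_add_distrib, Finset.sum_ite_eq' Finset.univ p (fun _ => k p)]
        simp
    _ ≤ _ := Finset.sum_le_sum (fun i _ => key i)

lemma Spart_add_le_total (n : ℕ) (k : Fin n → ℕ) (p : Fin n) :
    Spart n k p + k p ≤ ∑ i : Fin n, k i := by
  unfold Spart
  have key : ∀ i : Fin n,
      ((if (i:ℕ) < (p:ℕ) then k i else 0) + (if i = p then k p else 0)) ≤ k i := by
    intro i
    rcases eq_or_ne i p with rfl | hip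
    · simp
    · have : ¬ ((i:ℕ) = (p:ℕ)) := fun h => hip (Fin.ext h)
      split_ifs <;> simp_all
  calc (∑ i : Fin n, if (i:ℕ) < (p:ℕ) then k i else 0) + k p
      = ∑ i : Fin n, ((if (i:ℕ) < (p:ℕ) then k i else 0) + (if i = p then k p else 0)) := by
        rw [Finset.sum_add_distrib, Finset.sum_ite_eq' Finset.univ p (fun _ => k p)]
        simp
    _ ≤ _ := Finset.sum_le_sum (fun i _ => key i)

lemma blockD_transpose_mul (N n : ℕ) (k : Fin n → ℕ) (hsum : ∑ i : Fin n, k i ≤ N) :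
    (blockD N n k)ᵀ * blockD N n k = Matrix.diagonal (fun p => (k p : ℂ)) := by
  ext p q
  rw [Matrix.mul_apply]
  rcases eq_or_ne p q with rfl | hpq
  · simp only [Matrix.transpose_apply, Matrix.diagonal_apply_eq, blockD, Matrix.of_apply]
    have hcond : ∀ r : Fin N,
        ((if (Spart n k p) ≤ (r:ℕ) ∧ (r:ℕ) < (Spart n k p) + k p then (1:ℂ) else 0) *
         (if (Spart n k p) ≤ (r:ℕ) ∧ (r:ℕ) < (Spart n k p) + k p then (1:ℂ) else 0))
        = (if (r:ℕ) ∈ Finset.Ico (Spart n k p) (Spart n k p + k p) then (1:ℂ) else 0) := by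
      intro r; simp only [Finset.mem_Ico]; split_ifs <;> simp
    calc ∑ r : Fin N, _ = ∑ r : Fin N,
          (if (r:ℕ) ∈ Finset.Ico (Spart n k p) (Spart n k p + k p) then (1:ℂ) else 0) := by
          exact Finset.sum_congr rfl (fun r _ => hcond r)
      _ = ∑ r ∈ Finset.range N,
          (if r ∈ Finset.Ico (Spart n k p) (Spart n k p + k p) then (1:ℂ) else 0) := by
          exact Fin.sum_univ_eq_sum_range
            (fun r => if r ∈ Finset.Ico (Spart n k p) (Spart n k p + k p) then (1:ℂ) else 0) N
      _ = ∑ r ∈ Finset.range N ∩ Finset.Ico (Spart n k p) (Spart n k p + k p), (1:ℂ) := by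
          rw [Finset.sum_ite_mem]
      _ = (k p : ℂ) := by
          have hsub : Finset.Ico (Spart n k p) (Spart n k p + k p) ⊆ Finset.range N := by
            intro x hx
            rw [Finset.mem_Ico] at hx
            rw [Finset.mem_range]
            have := Spart_add_le_total n k p
            omega
          rw [Finset.inter_eq_right.2 hsub, Finset.sum_const, Nat.card_Ico]
          simp
  · simp only [Matrix.transpose_apply, Matrix.diagonal_apply_ne _ hpq, blockD, Matrix.of_apply]
    apply Finset.sum_eq_zero
    intro r _
    have hdisj : ¬ ((Spart n k p ≤ (r:ℕ) ∧ (r:ℕ) < Spart n k p + k p) ∧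
        (Spart n k q ≤ (r:ℕ) ∧ (r:ℕ) < Spart n k q + k q)) := by
      rintro ⟨⟨h1, h2⟩, ⟨h3, h4⟩⟩
      rcases lt_or_gt_of_ne (fun h => hpq (Fin.ext h) : (p:ℕ) ≠ (q:ℕ)) with h | h
      · have := Spart_add_le n k p q h; omega
      · have := Spart_add_le n k q p h; omega
    split_ifs with h1 h2
    · exact absurd ⟨h1, h2⟩ hdisj
    all_goals norm_num

end Aux

theorem one_large_block_eigenvectors
    (n N : ℕ) (hn : 0 < n) (hN : 0 < N)
    (G : Type*) [CommGroup G] [Fintype G] [DecidableEq G]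
    (g : Fin n ≃ G) (hg0 : g ⟨0, hn⟩ = 1)
    (f : G → ℝ) (hf : ∀ x : G, f x = f x⁻¹)
    (A : Matrix (Fin n) (Fin n) ℂ)
    (hA : ∀ i j, A i j = (f ((g i)⁻¹ * g j) : ℂ))
    (τ : ℝ) (hτpos : 0 < τ) (hτlt : τ < 1 / n)
    (kτ : ℕ) (hkτ : (kτ : ℝ) = τ * N) (hkle : (n - 1) * kτ ≤ N)
    (k : Fin n → ℕ) (hk : ∀ i, k i = if (i : ℕ) = 0 then N - (n - 1) * kτ else kτ)
    (μ : Fin n → ℝ) (hμ : ∀ i, μ i = if (i : ℕ) = 0 then 1 - τ * (n - 1) else τ)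
    (W : Matrix (Fin N) (Fin N) ℂ)
    (hW : W = blockD N n k * A * (blockD N n k)ᵀ)
    (V : Matrix (Fin N) (Fin n) ℂ)
    (hV : V = ((Real.sqrt N : ℂ))⁻¹ •
        (blockD N n k * Matrix.diagonal fun i => ((Real.sqrt (μ i))⁻¹ : ℂ)))
    (m : ℕ) (hm : 1 < m)
    (α : Fin m → (G →* ℂ)) (hαuni : ∀ j, ∀ x : G, ‖α j x‖ = 1)
    (hαinj : Function.Injective α)
    (γ : ℂ)
    (hαeig : ∀ j : Fin m, A.mulVec (fun p => α j (g p)) = γ • fun p => α j (g p)) :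
    (∀ i : Fin m, 0 < (i : ℕ) →
        W.mulVec (V.mulVec (pertVec g α i)) =
          ((N : ℂ) * (τ : ℂ) * γ) • V.mulVec (pertVec g α i)) ∧
      (∀ i i' : Fin m, 0 < (i : ℕ) → 0 < (i' : ℕ) → i ≠ i' →
        star (V.mulVec (pertVec g α i)) ⬝ᵥ V.mulVec (pertVec g α i') = 0) ∧
      m - 1 ≤ Module.finrank ℂ
        (Module.End.eigenspace (Matrix.toLin' W) ((N : ℂ) * (τ : ℂ) * γ)) := by
  classical
  set D := blockD N n k with hD
  set d : Fin n → ℂ := fun i => ((Real.sqrt (μ i))⁻¹ : ℂ) with hd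
  set u : Fin m → Fin n → ℂ := fun i => pertVec g α i with hu
  set c : Fin m → Fin m → ℂ :=
    fun i a => if a = i then ((i:ℕ):ℂ) else if (a:ℕ) < (i:ℕ) then -1 else 0 with hc
  -- sum of block sizes
  have hsumk : ∑ i : Fin n, k i = N := by
    have h0 : (⟨0, hn⟩ : Fin n) ∈ (Finset.univ : Finset (Fin n)) := Finset.mem_univ _
    rw [← Finset.add_sum_erase _ k h0]
    have h1 : ∀ i ∈ Finset.univ.erase (⟨0, hn⟩ : Fin n), k i = kτ := by
      intro i hi
      rw [Finset.mem_erase] at hi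
      rw [hk]
      have : (i:ℕ) ≠ 0 := fun h => hi.1 (Fin.ext h)
      simp [this]
    have hk0 : k ⟨0, hn⟩ = N - (n - 1) * kτ := by rw [hk]; simp
    rw [Finset.sum_congr rfl h1, Finset.sum_const, Finset.card_erase_of_mem h0,
      Finset.card_univ, Fintype.card_fin, hk0]
    simp only [smul_eq_mul]
    omega
  have hDtD : Dᵀ * D = Matrix.diagonal (fun p => (k p : ℂ)) :=
    blockD_transpose_mul N n k (le_of_eq hsumk)
  -- vanishing at the identity coordinate
  have hu0 : ∀ (i : Fin m) (p : Fin n), (p:ℕ) = 0 → u i p = 0 := by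
    intro i p hp
    have : p = ⟨0, hn⟩ := Fin.ext hp
    subst this
    show pertVec g α i ⟨0, hn⟩ = 0
    unfold pertVec
    rw [hg0]
    simp only [_root_.map_one, mul_one]
    rw [count_lt m i (le_of_lt i.2)]
    ring
  -- expansion of u in terms of characters
  have huexp : ∀ (i : Fin m) (p : Fin n), u i p = ∑ a : Fin m, c i a * α a (g p) := by
    intro i p
    show pertVec g α i p = _
    unfold pertVec
    have : ∀ a : Fin m, c i a * α a (g p)
        = (if a = i then ((i:ℕ):ℂ) * α a (g p) else 0)
          + (if (a:ℕ) < (i:ℕ) then -(α a (g p)) else 0) := by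
      intro a
      rw [hc]
      rcases eq_or_ne a i with rfl | hai
      · simp [lt_irrefl]
      · simp only [if_neg hai]
        split_ifs <;> ring
    rw [Finset.sum_congr rfl (fun a _ => this a), Finset.sum_add_distrib,
      Finset.sum_ite_eq' Finset.univ i (fun a => ((i:ℕ):ℂ) * α a (g p))]
    simp only [Finset.mem_univ, if_true]
    have : (∑ a : Fin m, if (a:ℕ) < (i:ℕ) then -(α a (g p) : ℂ) else 0)
        = -∑ a : Fin m, if (a:ℕ) < (i:ℕ) then (α a (g p) : ℂ) else 0 := by
      rw [← Finset.sum_neg_distrib]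
      apply Finset.sum_congr rfl; intro a _; split_ifs <;> simp
    rw [this]
    ring
  -- A acts on u i with eigenvalue γ
  have hAu : ∀ i : Fin m, A.mulVec (u i) = γ • u i := by
    intro i
    funext q
    have hcol' : ∀ a : Fin m, (∑ p : Fin n, A q p * α a (g p)) = γ * α a (g q) := by
      intro a
      have := congrFun (hαeig a) q
      simpa [Matrix.mulVec, dotProduct] using this
    show ∑ p : Fin n, A q p * u i p = γ * u i q
    calc ∑ p : Fin n, A q p * u i p
        = ∑ p : Fin n, ∑ a : Fin m, c i a * (A q p * α a (g p)) := by
          apply Finset.sum_congr rfl; intro p _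
          rw [huexp i p, Finset.mul_sum]
          apply Finset.sum_congr rfl; intro a _; ring
      _ = ∑ a : Fin m, c i a * ∑ p : Fin n, A q p * α a (g p) := by
          rw [Finset.sum_comm]
          apply Finset.sum_congr rfl; intro a _
          rw [Finset.mul_sum]
      _ = ∑ a : Fin m, c i a * (γ * α a (g q)) := by
          apply Finset.sum_congr rfl; intro a _; rw [hcol' a]
      _ = γ * u i q := by
          rw [huexp i q, Finset.mul_sum]
          apply Finset.sum_congr rfl; intro a _; ring
  -- diagonal scaling of u i
  have hdiagu : ∀ i : Fin m,
      (Matrix.diagonal d).mulVec (u i) = ((Real.sqrt τ : ℂ))⁻¹ • u i := by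
    intro i
    funext p
    rw [Matrix.mulVec_diagonal]
    by_cases hp : (p:ℕ) = 0
    · have h0 := hu0 i p hp
      simp [h0]
    · have : μ p = τ := by rw [hμ]; simp [hp]
      simp only [hd, this, Pi.smul_apply, smul_eq_mul]
  -- k-scaling of u i
  have hkmulu : ∀ i : Fin m, (fun p => (k p : ℂ) * u i p) = ((kτ:ℕ):ℂ) • u i := by
    intro i
    funext p
    by_cases hp : (p:ℕ) = 0
    · have h0 := hu0 i p hp
      simp [h0]
    · have : k p = kτ := by rw [hk]; simp [hp]
      simp only [this, Pi.smul_apply, smul_eq_mul]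
  have hkC : ((kτ:ℕ):ℂ) = (τ:ℂ) * (N:ℂ) := by
    have : ((kτ:ℕ):ℝ) = τ * N := hkτ
    calc ((kτ:ℕ):ℂ) = (((kτ:ℕ):ℝ) : ℂ) := by norm_cast
      _ = ((τ * N : ℝ) : ℂ) := by rw [this]
      _ = (τ:ℂ) * (N:ℂ) := by push_cast; ring
  -- V applied to u i
  have hVu : ∀ i : Fin m, V.mulVec (u i)
      = (((Real.sqrt N : ℂ))⁻¹ * ((Real.sqrt τ : ℂ))⁻¹) • D.mulVec (u i) := by
    intro i
    rw [hV]
    rw [Matrix.smul_mulVec, ← Matrix.mulVec_mulVec, hdiagu i, Matrix.mulVec_smul,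
      smul_smul]
  -- W acting on D.mulVec (u i)
  have hWDu : ∀ i : Fin m, W.mulVec (D.mulVec (u i))
      = ((N:ℂ) * (τ:ℂ) * γ) • D.mulVec (u i) := by
    intro i
    rw [hW]
    rw [Matrix.mulVec_mulVec, Matrix.mul_assoc (D * A) Dᵀ D, hDtD]
    rw [← Matrix.mulVec_mulVec, ← Matrix.mulVec_mulVec]
    have hdiag : (Matrix.diagonal (fun p => (k p : ℂ))).mulVec (u i) = ((kτ:ℕ):ℂ) • u i := by
      funext p
      rw [Matrix.mulVec_diagonal]
      exact congrFun (hkmulu i) p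
    rw [hdiag, Matrix.mulVec_smul, hAu i, Matrix.mulVec_smul, Matrix.mulVec_smul, hkC]
    simp only [smul_smul]
    congr 1
    ring
  -- eigen equation for all i
  have heig : ∀ i : Fin m, W.mulVec (V.mulVec (u i))
      = ((N:ℂ) * (τ:ℂ) * γ) • V.mulVec (u i) := by
    intro i
    rw [hVu i, Matrix.mulVec_smul, hWDu i]
    simp only [smul_smul]
    congr 1
    ring
  -- D has real (0/1) entries
  have hDreal : ∀ (r : Fin N) (p : Fin n), star (D r p) = D r p := by
    intro r p
    show star (blockD N n k r p) = blockD N n k r p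
    unfold blockD
    simp only [Matrix.of_apply]
    split_ifs <;> simp
  have hstarD : ∀ x : Fin n → ℂ, star (D.mulVec x) = D.mulVec (star x) := by
    intro x
    funext r
    show star (∑ p, D r p * x p) = ∑ p, D r p * star (x p)
    rw [star_sum]
    apply Finset.sum_congr rfl
    intro p _
    rw [star_mul', hDreal r p]
  -- square roots
  have hsN : (Real.sqrt N : ℂ) * (Real.sqrt N : ℂ) = (N:ℂ) := by
    rw [← Complex.ofReal_mul, Real.mul_self_sqrt (by positivity)]
    norm_cast
  have hsτ : (Real.sqrt τ : ℂ) * (Real.sqrt τ : ℂ) = (τ:ℂ) := by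
    rw [← Complex.ofReal_mul, Real.mul_self_sqrt hτpos.le]
  have hsN0 : (Real.sqrt N : ℂ) ≠ 0 :=
    Complex.ofReal_ne_zero.mpr (ne_of_gt (Real.sqrt_pos.mpr (by positivity)))
  have hsτ0 : (Real.sqrt τ : ℂ) ≠ 0 :=
    Complex.ofReal_ne_zero.mpr (ne_of_gt (Real.sqrt_pos.mpr hτpos))
  have hc1 : (((Real.sqrt N : ℂ))⁻¹ * ((Real.sqrt τ : ℂ))⁻¹)
      * (((Real.sqrt N : ℂ))⁻¹ * ((Real.sqrt τ : ℂ))⁻¹) * ((kτ:ℕ):ℂ) = 1 := by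
    rw [hkC, ← hsN, ← hsτ]
    field_simp
  -- inner products through V
  have hip : ∀ i i' : Fin m, star (V.mulVec (u i)) ⬝ᵥ V.mulVec (u i')
      = ∑ p : Fin n, conj (u i p) * u i' p := by
    intro i i'
    rw [hVu i, hVu i']
    rw [star_smul, smul_dotProduct, dotProduct_smul]
    have hcstar : star (((Real.sqrt N : ℂ))⁻¹ * ((Real.sqrt τ : ℂ))⁻¹)
        = ((Real.sqrt N : ℂ))⁻¹ * ((Real.sqrt τ : ℂ))⁻¹ := by
      rw [star_mul']
      simp [← Complex.ofReal_inv, Complex.conj_ofReal]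
    rw [hcstar]
    have hcore : star (D.mulVec (u i)) ⬝ᵥ D.mulVec (u i')
        = ((kτ:ℕ):ℂ) * ∑ p : Fin n, conj (u i p) * u i' p := by
      rw [hstarD]
      have h1 : D.mulVec (star (u i)) ⬝ᵥ D.mulVec (u i')
          = star (u i) ⬝ᵥ (Dᵀ * D).mulVec (u i') := by
        rw [dotProduct_comm, Matrix.dotProduct_mulVec, ← Matrix.mulVec_transpose,
          Matrix.mulVec_mulVec, dotProduct_comm]
      rw [h1, hDtD]
      have h2 : ∀ p : Fin n, star (u i) p * ((Matrix.diagonal fun p => (k p : ℂ)).mulVec (u i')) p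
          = ((kτ:ℕ):ℂ) * (conj (u i p) * u i' p) := by
        intro p
        rw [Matrix.mulVec_diagonal]
        by_cases hp : (p:ℕ) = 0
        · rw [hu0 i' p hp, hu0 i p hp]
          simp
        · have hkp : k p = kτ := by rw [hk]; simp [hp]
          rw [hkp]
          show conj (u i p) * (((kτ:ℕ):ℂ) * u i' p) = ((kτ:ℕ):ℂ) * (conj (u i p) * u i' p)
          ring
      show ∑ p : Fin n, star (u i) p * ((Matrix.diagonal fun p => (k p : ℂ)).mulVec (u i')) p = _
      rw [Finset.sum_congr rfl (fun p _ => h2 p), ← Finset.mul_sum]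
    rw [hcore]
    simp only [smul_eq_mul]
    have := hc1
    linear_combination (∑ p : Fin n, conj (u i p) * u i' p) * this
  -- character orthogonality, transported to Fin n
  have hcardG : Fintype.card G = n := by
    rw [← Fintype.card_fin n]
    exact (Fintype.card_congr g).symm
  have hchar : ∀ a b : Fin m, (∑ p : Fin n, conj (α a (g p)) * α b (g p))
      = if a = b then (n:ℂ) else 0 := by
    intro a b
    have hre : (∑ p : Fin n, conj (α a (g p)) * α b (g p))
        = ∑ x : G, conj (α a x) * α b x :=
      Fintype.sum_equiv g _ _ (fun p => rfl)
    rw [hre]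
    rcases eq_or_ne a b with rfl | hab
    · simp only [if_pos rfl]
      have hone : ∀ x : G, conj (α a x) * α a x = 1 := fun x => by
        have := conj_char_mul (α a) (hαuni a) x
        linear_combination this
      rw [Finset.sum_congr rfl (fun x _ => hone x), Finset.sum_const, Finset.card_univ, hcardG]
      simp
    · rw [if_neg hab]
      exact char_orth G (α a) (α b) (hαuni a) (fun h => hab (hαinj h))
  -- reduction of inner products to coefficient sums
  have hipc : ∀ i i' : Fin m, (∑ p : Fin n, conj (u i p) * u i' p)
      = (n:ℂ) * ∑ a : Fin m, conj (c i a) * c i' a := by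
    intro i i'
    calc ∑ p : Fin n, conj (u i p) * u i' p
        = ∑ p : Fin n, ∑ a : Fin m, ∑ b : Fin m,
            (conj (c i a) * c i' b) * (conj (α a (g p)) * α b (g p)) := by
          apply Finset.sum_congr rfl; intro p _
          rw [huexp i p, huexp i' p, map_sum, Finset.sum_mul_sum]
          apply Finset.sum_congr rfl; intro a _
          apply Finset.sum_congr rfl; intro b _
          rw [_root_.map_mul]; ring
      _ = ∑ a : Fin m, ∑ b : Fin m,
            (conj (c i a) * c i' b) * ∑ p : Fin n, conj (α a (g p)) * α b (g p) := by
          rw [Finset.sum_comm]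
          apply Finset.sum_congr rfl; intro a _
          rw [Finset.sum_comm]
          apply Finset.sum_congr rfl; intro b _
          rw [Finset.mul_sum]
      _ = ∑ a : Fin m, ∑ b : Fin m,
            (conj (c i a) * c i' b) * (if a = b then (n:ℂ) else 0) := by
          apply Finset.sum_congr rfl; intro a _
          apply Finset.sum_congr rfl; intro b _
          rw [hchar a b]
      _ = (n:ℂ) * ∑ a : Fin m, conj (c i a) * c i' a := by
          rw [Finset.mul_sum]
          apply Finset.sum_congr rfl; intro a _
          have hpt : ∀ b : Fin m, (conj (c i a) * c i' b) * (if a = b then (n:ℂ) else 0)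
              = if b = a then (n:ℂ) * (conj (c i a) * c i' b) else 0 := by
            intro b
            rcases eq_or_ne a b with rfl | hab
            · simp [mul_comm]
            · rw [if_neg hab, if_neg (Ne.symm hab)]; ring
          rw [Finset.sum_congr rfl (fun b _ => hpt b),
            Finset.sum_ite_eq' Finset.univ a (fun b => (n:ℂ) * (conj (c i a) * c i' b))]
          simp
  have hcreal : ∀ (i a : Fin m), conj (c i a) = c i a := by
    intro i a
    show conj (if a = i then ((i:ℕ):ℂ) else if (a:ℕ) < (i:ℕ) then -1 else 0)
        = (if a = i then ((i:ℕ):ℂ) else if (a:ℕ) < (i:ℕ) then -1 else 0)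
    split_ifs <;> simp
  -- coefficient sums
  have horth0 : ∀ i i' : Fin m, (i:ℕ) < (i':ℕ) → (∑ a : Fin m, c i a * c i' a) = 0 := by
    intro i i' hlt
    have hii' : i ≠ i' := by
      intro h; rw [h] at hlt; exact lt_irrefl _ hlt
    have hpt : ∀ a : Fin m, c i a * c i' a
        = (if a = i then -(((i:ℕ):ℂ)) else 0) + (if (a:ℕ) < (i:ℕ) then (1:ℂ) else 0) := by
      intro a
      show (if a = i then ((i:ℕ):ℂ) else if (a:ℕ) < (i:ℕ) then -1 else 0)
          * (if a = i' then ((i':ℕ):ℂ) else if (a:ℕ) < (i':ℕ) then -1 else 0) = _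
      rcases eq_or_ne a i with rfl | hai
      · simp [hii', hlt]
      · have h3 : (a:ℕ) < (i:ℕ) → a ≠ i' := by
          intro h2 h; rw [h] at h2; omega
        by_cases hai2 : (a:ℕ) < (i:ℕ)
        · have h2 : (a:ℕ) < (i':ℕ) := hai2.trans hlt
          simp [hai, hai2, h2, h3 hai2]
        · simp [hai, hai2]
    rw [Finset.sum_congr rfl (fun a _ => hpt a), Finset.sum_add_distrib,
      Finset.sum_ite_eq' Finset.univ i (fun _ => -(((i:ℕ):ℂ))), count_lt m i (le_of_lt i.2)]
    simp
  have hself : ∀ i : Fin m, (∑ a : Fin m, c i a * c i a)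
      = ((i:ℕ):ℂ) * ((i:ℕ):ℂ) + ((i:ℕ):ℂ) := by
    intro i
    have hpt : ∀ a : Fin m, c i a * c i a
        = (if a = i then ((i:ℕ):ℂ) * ((i:ℕ):ℂ) else 0)
          + (if (a:ℕ) < (i:ℕ) then (1:ℂ) else 0) := by
      intro a
      show (if a = i then ((i:ℕ):ℂ) else if (a:ℕ) < (i:ℕ) then -1 else 0)
          * (if a = i then ((i:ℕ):ℂ) else if (a:ℕ) < (i:ℕ) then -1 else 0) = _
      rcases eq_or_ne a i with rfl | hai
      · simp
      · by_cases hai2 : (a:ℕ) < (i:ℕ)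
        · simp [hai, hai2]
        · simp [hai, hai2]
    rw [Finset.sum_congr rfl (fun a _ => hpt a), Finset.sum_add_distrib,
      Finset.sum_ite_eq' Finset.univ i (fun _ => ((i:ℕ):ℂ) * ((i:ℕ):ℂ)),
      count_lt m i (le_of_lt i.2)]
    simp
  -- inner products of V-images
  have hdots : ∀ i i' : Fin m, star (V.mulVec (u i)) ⬝ᵥ V.mulVec (u i')
      = (n:ℂ) * ∑ a : Fin m, c i a * c i' a := by
    intro i i'
    rw [hip i i', hipc i i']
    congr 1
    exact Finset.sum_congr rfl (fun a _ => by rw [hcreal i a])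
  have horthV : ∀ i i' : Fin m, i ≠ i' →
      star (V.mulVec (u i)) ⬝ᵥ V.mulVec (u i') = 0 := by
    intro i i' hne
    rw [hdots i i']
    rcases lt_or_gt_of_ne (fun h => hne (Fin.ext h) : (i:ℕ) ≠ (i':ℕ)) with h | h
    · rw [horth0 i i' h]; ring
    · have hcomm : (∑ a : Fin m, c i a * c i' a) = ∑ a : Fin m, c i' a * c i a :=
        Finset.sum_congr rfl (fun a _ => mul_comm _ _)
      rw [hcomm, horth0 i' i h]; ring
  have hselfne : ∀ i : Fin m, 0 < (i:ℕ) →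
      star (V.mulVec (u i)) ⬝ᵥ V.mulVec (u i) ≠ 0 := by
    intro i hi
    rw [hdots i i, hself i]
    have h1 : ((i:ℕ):ℂ) * ((i:ℕ):ℂ) + ((i:ℕ):ℂ) = (((i:ℕ) * (i:ℕ) + (i:ℕ) : ℕ) : ℂ) := by
      push_cast; ring
    rw [h1]
    apply mul_ne_zero
    · exact Nat.cast_ne_zero.mpr hn.ne'
    · exact Nat.cast_ne_zero.mpr (by omega)
  refine ⟨fun i _ => heig i, fun i i' _ _ hne => horthV i i' hne, ?_⟩
  -- multiplicity bound
  have hmem : ∀ i : Fin m, V.mulVec (u i) ∈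
      Module.End.eigenspace (Matrix.toLin' W) ((N:ℂ) * (τ:ℂ) * γ) := by
    intro i
    rw [Module.End.mem_eigenspace_iff, Matrix.toLin'_apply]
    exact heig i
  set E := Module.End.eigenspace (Matrix.toLin' W) ((N:ℂ) * (τ:ℂ) * γ) with hE
  let idx : Fin (m - 1) → Fin m := fun t => ⟨(t:ℕ) + 1, by have := t.2; omega⟩
  let v : Fin (m - 1) → (Fin N → ℂ) := fun t => V.mulVec (u (idx t))
  have hidxinj : Function.Injective idx := by
    intro s t h
    have : (s:ℕ) + 1 = (t:ℕ) + 1 := congrArg Fin.val h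
    exact Fin.ext (by omega)
  have hvli : LinearIndependent ℂ v := by
    rw [Fintype.linearIndependent_iff]
    intro cf hcf t
    have h1 : star (v t) ⬝ᵥ (∑ s : Fin (m - 1), cf s • v s) = 0 := by
      rw [hcf, dotProduct_zero]
    have h2 : star (v t) ⬝ᵥ (∑ s : Fin (m - 1), cf s • v s)
        = ∑ s : Fin (m - 1), cf s * (star (v t) ⬝ᵥ v s) := by
      show (∑ r : Fin N, star (v t) r * (∑ s : Fin (m - 1), cf s • v s) r) = _
      have : ∀ r : Fin N, star (v t) r * (∑ s : Fin (m - 1), cf s • v s) r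
          = ∑ s : Fin (m - 1), cf s * (star (v t) r * v s r) := by
        intro r
        rw [Finset.sum_apply, Finset.mul_sum]
        apply Finset.sum_congr rfl
        intro s _
        simp only [Pi.smul_apply, smul_eq_mul]
        ring
      rw [Finset.sum_congr rfl (fun r _ => this r), Finset.sum_comm]
      apply Finset.sum_congr rfl
      intro s _
      rw [← Finset.mul_sum]
      rfl
    have h3 : (∑ s : Fin (m - 1), cf s * (star (v t) ⬝ᵥ v s))
        = cf t * (star (v t) ⬝ᵥ v t) := by
      apply Finset.sum_eq_single t
      · intro s _ hs
        rw [horthV (idx t) (idx s) (fun h => hs (hidxinj h).symm)]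
        ring
      · intro h
        exact absurd (Finset.mem_univ t) h
    have h4 : star (v t) ⬝ᵥ v t ≠ 0 := hselfne (idx t) (by simp [idx])
    have := h2.symm.trans h1
    rw [h3] at this
    exact (mul_eq_zero.mp this).resolve_right h4
  have hwli : LinearIndependent ℂ
      (fun t : Fin (m - 1) => (⟨v t, hmem (idx t)⟩ : E)) := by
    apply LinearIndependent.of_comp E.subtype
    exact hvli
  calc m - 1 = Fintype.card (Fin (m - 1)) := (Fintype.card_fin _).symm
    _ ≤ Module.finrank ℂ E := hwli.fintype_card_le_finrank
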